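/- Let F be a nontrivial finite group and let G_n = F for all n ∈ ℕ. Then the full direct product ∏_{n∈ℕ} G_n cannot be written as the union of a countable increasing chain of proper subgroups if and only if F is perfect (i.e., the commutator subgroup of F equals F). -/

import Mathlib

namespace KTaux

variable {F : Type*} [Group F]

/-- subgroup of elements of `ℕ → F` supported in `S` -/
def GS (F : Type*) [Group F] (S : Set ℕ) : Subgroup (ℕ → F) where
  carrier := {g | ∀ i, i ∉ S → g i = 1}
  one_mem' := fun _ _ => rfl
  mul_mem' := by
    intro a b ha hb i hi
    simp only [Pi.mul_apply, ha i hi, hb i hi, one_mul]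
  inv_mem' := by
    intro a ha i hi
    simp only [Pi.inv_apply, ha i hi, inv_one]

lemma mem_GS {S : Set ℕ} {g : ℕ → F} : g ∈ GS F S ↔ ∀ i ∉ S, g i = 1 := Iff.rfl

lemma GS_mono {S T : Set ℕ} (h : S ⊆ T) : GS F S ≤ GS F T :=
  fun _ hg i hi => hg i (fun c => hi (h c))

lemma GS_univ : GS F Set.univ = ⊤ := by
  ext g; simp [mem_GS]

open Classical in
/-- indicator function -/
noncomputable def indic (T : Set ℕ) (c : F) : ℕ → F := fun i => if i ∈ T then c else 1

lemma indic_of_mem {T : Set ℕ} {i : ℕ} (h : i ∈ T) (c : F) : indic T c i = c := by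
  simp [indic, h]

lemma indic_of_not_mem {T : Set ℕ} {i : ℕ} (h : i ∉ T) (c : F) : indic T c i = 1 := by
  simp [indic, h]

lemma indic_mem_GS {T S : Set ℕ} (h : T ⊆ S) (c : F) : indic T c ∈ GS F S := by
  intro i hi
  exact indic_of_not_mem (fun hT => hi (h hT)) c

lemma GS_split {S T : Set ℕ} {g : ℕ → F} (hg : g ∈ GS F (S ∪ T)) :
    ∃ a b : ℕ → F, a ∈ GS F S ∧ b ∈ GS F T ∧ g = a * b := by
  classical
  refine ⟨fun i => if i ∈ S then g i else 1, fun i => if i ∈ S then 1 else g i, ?_, ?_, ?_⟩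
  · intro i hi; simp [if_neg hi]
  · intro i hi
    by_cases hS : i ∈ S
    · simp [if_pos hS]
    · simp [if_neg hS, hg i (by simp [hS, hi])]
  · funext i
    by_cases hS : i ∈ S <;> simp [Pi.mul_apply, hS]

open commutatorElement in
/-- Key algebraic lemma: a subgroup of `ℕ → F` (for `F` perfect) which contains all
"constants on `S`" and is closed under conjugation by elements of `GS F S`
contains all of `GS F S`. -/
lemma lemN [Finite F] (hcomm : commutator F = ⊤) (S : Set ℕ) (D : Subgroup (ℕ → F))
    (hconst : ∀ c : F, indic S c ∈ D)
    (hconj : ∀ u ∈ GS F S, ∀ w ∈ D, u * w * u⁻¹ ∈ D) :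
    GS F S ≤ D := by
  classical
  haveI := Fintype.ofFinite F
  -- all indicators with values anywhere lie in D
  have key : ∀ f : F, ∀ T : Set ℕ, T ⊆ S → indic T f ∈ D := by
    let Sg : Subgroup F := {
      carrier := {f | ∀ T : Set ℕ, T ⊆ S → indic T f ∈ D}
      one_mem' := by
        intro T _
        have h1 : indic T (1 : F) = (1 : ℕ → F) := by
          funext i
          by_cases hi : i ∈ T
          · simp [indic_of_mem hi]
          · simp [indic_of_not_mem hi]
        rw [h1]; exact D.one_mem
      mul_mem' := by
        intro a b ha hb T hT
        have h1 : indic T (a * b) = indic T a * indic T b := by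
          funext i
          by_cases hi : i ∈ T
          · simp [Pi.mul_apply, indic_of_mem hi]
          · simp [Pi.mul_apply, indic_of_not_mem hi]
        rw [h1]; exact D.mul_mem (ha T hT) (hb T hT)
      inv_mem' := by
        intro a ha T hT
        have h1 : indic T a⁻¹ = (indic T a)⁻¹ := by
          funext i
          by_cases hi : i ∈ T
          · simp [Pi.inv_apply, indic_of_mem hi]
          · simp [Pi.inv_apply, indic_of_not_mem hi]
        rw [h1]; exact D.inv_mem (ha T hT) }
    have hSgtop : (⊤ : Subgroup F) ≤ Sg := by
      rw [← hcomm, commutator_eq_closure, Subgroup.closure_le]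
      rintro f ⟨a, b, rfl⟩
      intro T hT
      have hrw : indic T ⁅a, b⁆ =
          indic T a * indic S b * (indic T a)⁻¹ * (indic S b)⁻¹ := by
        funext i
        simp only [Pi.mul_apply, Pi.inv_apply]
        by_cases hiT : i ∈ T
        · have hiS : i ∈ S := hT hiT
          simp [indic_of_mem hiT, indic_of_mem hiS, commutatorElement_def, mul_assoc]
        · by_cases hiS : i ∈ S
          · simp [indic_of_not_mem hiT, indic_of_mem hiS]
          · simp [indic_of_not_mem hiT, indic_of_not_mem hiS]
      rw [hrw]
      exact D.mul_mem (hconj _ (indic_mem_GS hT a) _ (hconst b)) (D.inv_mem (hconst b))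
    intro f T hT
    exact hSgtop (Subgroup.mem_top f) T hT
  -- decompose arbitrary element of GS S as finite product of indicators,
  -- by induction on the (finite) set of values
  intro h hh
  have main : ∀ (s : Finset F) (g : ℕ → F), g ∈ GS F S → (∀ i ∈ S, g i ∈ s ∨ g i = 1) →
      g ∈ D := by
    intro s
    induction s using Finset.induction_on with
    | empty =>
      intro g hg hvals
      have : g = 1 := by
        funext i
        by_cases hi : i ∈ S
        · rcases hvals i hi with h' | h'
          · exact absurd h' (by simp)
          · exact h'
        · exact hg i hi
      rw [this]; exact D.one_mem
    | @insert c s hc ih =>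
      intro g hg hvals
      set T : Set ℕ := {i | i ∈ S ∧ g i = c} with hT
      set g' : ℕ → F := fun i => if i ∈ T then 1 else g i with hg'
      have hgdec : g = indic T c * g' := by
        funext i
        simp only [Pi.mul_apply, hg']
        by_cases hi : i ∈ T
        · simp [indic_of_mem hi, if_pos hi, hi.2]
        · simp [indic_of_not_mem hi, if_neg hi]
      have hg'mem : g' ∈ GS F S := by
        intro i hi
        simp only [hg']
        by_cases hiT : i ∈ T
        · simp [if_pos hiT]
        · simp [if_neg hiT, hg i hi]
      have hg'vals : ∀ i ∈ S, g' i ∈ s ∨ g' i = 1 := by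
        intro i hi
        simp only [hg']
        by_cases hiT : i ∈ T
        · simp [if_pos hiT]
        · rw [if_neg hiT]
          rcases hvals i hi with h' | h'
          · rcases Finset.mem_insert.1 h' with h'' | h''
            · exact absurd ⟨hi, h''⟩ hiT
            · exact Or.inl h''
          · exact Or.inr h'
      rw [hgdec]
      exact D.mul_mem (key c T (fun i hi => hi.1)) (ih g' hg'mem hg'vals)
  exact main Finset.univ h hh (fun i _ => Or.inl (Finset.mem_univ _))
end KTaux
namespace KTaux
section chain

variable {F : Type*} [Group F] [Finite F]
variable (H : ℕ → Subgroup (ℕ → F))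

/-- `S` is light if the full subproduct supported on `S` is contained in some `H n`. -/
def light (S : Set ℕ) : Prop := ∃ n, GS F S ≤ H n

variable {H}
variable (hmono : Monotone H) (hcover : ∀ g : ℕ → F, ∃ n, g ∈ H n)
  (hproper : ∀ n, H n ≠ ⊤) (hcomm : commutator F = ⊤)

include hmono in
lemma light_union {S T : Set ℕ} (hS : light H S) (hT : light H T) : light H (S ∪ T) := by
  obtain ⟨n, hn⟩ := hS
  obtain ⟨m, hm⟩ := hT
  refine ⟨max n m, ?_⟩
  intro g hg
  obtain ⟨a, b, ha, hb, rfl⟩ := GS_split hg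
  exact (H (max n m)).mul_mem (hmono (le_max_left n m) (hn ha))
    (hmono (le_max_right n m) (hm hb))

lemma light_mono {S T : Set ℕ} (hsub : S ⊆ T) (hT : light H T) : light H S := by
  obtain ⟨n, hn⟩ := hT
  exact ⟨n, le_trans (GS_mono hsub) hn⟩

include hproper in
lemma not_light_univ : ¬ light H Set.univ := by
  rintro ⟨n, hn⟩
  apply hproper n
  rw [eq_top_iff, ← GS_univ (F := F)]
  exact hn

include hcover hmono in
lemma const_bound (S : Set ℕ) : ∃ M, ∀ c : F, indic S c ∈ H M := by
  classical
  haveI := Fintype.ofFinite F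
  have h : ∀ c : F, ∃ n, indic S c ∈ H n := fun c => hcover (indic S c)
  choose f hf using h
  refine ⟨Finset.univ.sup f, fun c => hmono ?_ (hf c)⟩
  exact Finset.le_sup (Finset.mem_univ c)

include hmono hcover hcomm in
/-- Existence of a "seal" on a heavy set. -/
lemma seal_exists {S : Set ℕ} (hS : ¬ light H S) (n : ℕ) :
    ∃ (ν : ℕ) (u w : ℕ → F), u ∈ GS F S ∧ w ∈ H ν ∧ w ∈ GS F S ∧
      u * w * u⁻¹ * w⁻¹ ∉ H (max n ν) := by
  by_contra hno
  push_neg at hno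
  obtain ⟨M, hM⟩ := const_bound hmono hcover (F := F) S
  set ν' := max n M with hν'
  apply hS
  refine ⟨ν', ?_⟩
  have hmax : max n ν' = ν' := max_eq_right (le_max_left n M)
  have hD : GS F S ≤ (H ν') ⊓ GS F S := by
    apply lemN hcomm
    · intro c
      exact ⟨hmono (le_max_right n M) (hM c), indic_mem_GS (le_refl S) c⟩
    · rintro u hu w ⟨hw1, hw2⟩
      have hcommut := hno ν' u w hu hw1 hw2
      rw [hmax] at hcommut
      constructor
      · have : u * w * u⁻¹ = (u * w * u⁻¹ * w⁻¹) * w := by group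
        rw [this]
        exact (H ν').mul_mem hcommut hw1
      · exact (GS F S).mul_mem ((GS F S).mul_mem hu hw2) ((GS F S).inv_mem hu)
  exact le_trans hD inf_le_left

include hmono hcover hcomm in
/-- There is no infinite family of pairwise disjoint heavy sets. -/
lemma no_disjoint_heavy_family (S : ℕ → Set ℕ)
    (hdisj : ∀ j k, j ≠ k → Disjoint (S j) (S k))
    (hheavy : ∀ k, ¬ light H (S k)) : False := by
  classical
  have hseal : ∀ k, ∃ (ν : ℕ) (u w : ℕ → F), u ∈ GS F (S k) ∧ w ∈ H ν ∧ w ∈ GS F (S k) ∧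
      u * w * u⁻¹ * w⁻¹ ∉ H (max k ν) := fun k => seal_exists hmono hcover hcomm (hheavy k) k
  choose ν u w hu hwH hwS hbad using hseal
  set g : ℕ → F := fun i => if h : ∃ k, i ∈ S k then u h.choose i else 1 with hgdef
  have hg : ∀ k i, i ∈ S k → g i = u k i := by
    intro k i hi
    have hex : ∃ k, i ∈ S k := ⟨k, hi⟩
    have hch : hex.choose = k := by
      by_contra hne
      exact Set.disjoint_left.1 (hdisj _ _ hne) hex.choose_spec hi
    simp only [hgdef, dif_pos hex, hch]
  obtain ⟨N, hgN⟩ := hcover g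
  have key : u N * w N * (u N)⁻¹ * (w N)⁻¹ = g * w N * g⁻¹ * (w N)⁻¹ := by
    funext i
    simp only [Pi.mul_apply, Pi.inv_apply]
    by_cases hi : i ∈ S N
    · rw [hg N i hi]
    · rw [hwS N i hi]
      simp
  apply hbad N
  rw [key]
  have h1 : g ∈ H (max N (ν N)) := hmono (le_max_left _ _) hgN
  have h2 : w N ∈ H (max N (ν N)) := hmono (le_max_right _ _) (hwH N)
  exact mul_mem (mul_mem (mul_mem h1 h2) (inv_mem h1)) (inv_mem h2)

end chain
end KTaux
namespace KTaux
section main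

variable {F : Type*} [Group F] [Finite F]
variable {H : ℕ → Subgroup (ℕ → F)}
variable (hmono : Monotone H) (hcover : ∀ g : ℕ → F, ∃ n, g ∈ H n)
  (hproper : ∀ n, H n ≠ ⊤) (hcomm : commutator F = ⊤)

lemma light_empty : light H (∅ : Set ℕ) := by
  refine ⟨0, fun g hg => ?_⟩
  have : g = 1 := funext fun i => hg i (Set.notMem_empty i)
  rw [this]; exact (H 0).one_mem

include hmono in
lemma light_finset_union {γ : Type*} (s : Finset γ) (A : γ → Set ℕ)
    (h : ∀ c ∈ s, light H (A c)) : light H (⋃ c ∈ s, A c) := by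
  classical
  induction s using Finset.induction_on with
  | empty =>
    have he : (⋃ c ∈ (∅ : Finset γ), A c) = ∅ := by simp
    rw [he]; exact light_empty
  | @insert c s hc ih =>
    have : (⋃ d ∈ insert c s, A d) = A c ∪ ⋃ d ∈ s, A d := by
      simp [Set.biUnion_insert]
    rw [this]
    exact light_union hmono (h c (Finset.mem_insert_self c s))
      (ih (fun d hd => h d (Finset.mem_insert_of_mem hd)))

include hmono hcover hproper hcomm in
lemma main_contra : False := by
  classical
  haveI := Fintype.ofFinite F
  by_cases hat : ∃ Sstar : Set ℕ, ¬ light H Sstar ∧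
      ∀ T, T ⊆ Sstar → ¬ light H T → light H (Sstar \ T)
  · -- atomic case
    obtain ⟨Sstar, hh, hcl⟩ := hat
    -- every element of GS Sstar has a heavy fiber
    have hval : ∀ x : ℕ → F, x ∈ GS F Sstar →
        ∃ c : F, ¬ light H {i | i ∈ Sstar ∧ x i = c} := by
      intro x hx
      by_contra hno
      push_neg at hno
      apply hh
      have hsub : Sstar ⊆ ⋃ c ∈ (Finset.univ : Finset F), {i | i ∈ Sstar ∧ x i = c} := by
        intro i hi
        simp only [Set.mem_iUnion]
        exact ⟨x i, Finset.mem_univ _, hi, rfl⟩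
      exact light_mono hsub
        (light_finset_union hmono Finset.univ _ (fun c _ => hno c))
    -- fresh light pieces avoiding any light set, escaping any level
    have fresh : ∀ W : Set ℕ, light H W → ∀ k : ℕ,
        ∃ L : Set ℕ, L ⊆ Sstar ∧ Disjoint L W ∧ light H L ∧ ¬ (GS F L ≤ H k) := by
      intro W hW k
      obtain ⟨mW, hmW⟩ := hW
      by_contra hno
      push_neg at hno
      have hbound : ∀ T, T ⊆ Sstar → light H T → GS F T ≤ H (max k mW) := by
        intro T hTs hTl g hg
        have hg' : g ∈ GS F ((T \ W) ∪ (T ∩ W)) := by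
          rwa [Set.diff_union_inter]
        obtain ⟨a, b, ha, hb, rfl⟩ := GS_split hg'
        have ha' : a ∈ H k :=
          hno (T \ W) (le_trans Set.diff_subset hTs) Set.disjoint_sdiff_left
            (light_mono Set.diff_subset hTl) ha
        have hb' : b ∈ H mW := hmW (GS_mono Set.inter_subset_right hb)
        exact (H (max k mW)).mul_mem (hmono (le_max_left _ _) ha')
          (hmono (le_max_right _ _) hb')
      obtain ⟨M, hM⟩ := const_bound hmono hcover (F := F) Sstar
      apply hh
      refine ⟨max (max k mW) M, ?_⟩
      intro x hx
      obtain ⟨c, hc⟩ := hval x hx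
      have hTlight : light H (Sstar \ {i | i ∈ Sstar ∧ x i = c}) :=
        hcl _ (fun i hi => hi.1) hc
      have hy : x * (indic Sstar c)⁻¹ ∈ GS F (Sstar \ {i | i ∈ Sstar ∧ x i = c}) := by
        intro i hi
        simp only [Pi.mul_apply, Pi.inv_apply]
        by_cases hiS : i ∈ Sstar
        · have hxc : x i = c := by
            by_contra hxc
            exact hi ⟨hiS, fun hmem => hxc hmem.2⟩
          rw [hxc, indic_of_mem hiS]
          simp
        · rw [hx i hiS, indic_of_not_mem hiS]
          simp
      have h1 : x * (indic Sstar c)⁻¹ ∈ H (max k mW) :=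
        hbound _ Set.diff_subset hTlight hy
      have h2 : indic Sstar c ∈ H M := hM c
      have hxeq : x = (x * (indic Sstar c)⁻¹) * indic Sstar c := by group
      rw [hxeq]
      exact (H _).mul_mem (hmono (le_max_left _ _) h1) (hmono (le_max_right _ _) h2)
    -- recursive construction of disjoint light sets with unbounded levels
    let St : ℕ → Type _ := fun k =>
      {p : Set ℕ × Set ℕ // light H p.2 ∧ p.1 ⊆ Sstar ∧ Disjoint p.1 p.2 ∧
        light H p.1 ∧ ¬ (GS F p.1 ≤ H k)}
    have step : ∀ (W : Set ℕ), light H W → ∀ k : ℕ,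
        {L : Set ℕ // L ⊆ Sstar ∧ Disjoint L W ∧ light H L ∧ ¬ (GS F L ≤ H k)} :=
      fun W hW k => ⟨(fresh W hW k).choose, (fresh W hW k).choose_spec⟩
    let state : ∀ k : ℕ, St k := fun k => Nat.rec
      (motive := St)
      (⟨((step ∅ light_empty 0).1, ∅), light_empty, (step ∅ light_empty 0).2.1,
        (step ∅ light_empty 0).2.2.1, (step ∅ light_empty 0).2.2.2.1,
        (step ∅ light_empty 0).2.2.2.2⟩)
      (fun k p =>
        ⟨((step (p.1.2 ∪ p.1.1) (light_union hmono p.2.1 p.2.2.2.2.1) (k+1)).1,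
          p.1.2 ∪ p.1.1),
          light_union hmono p.2.1 p.2.2.2.2.1,
          (step _ _ _).2.1, (step _ _ _).2.2.1, (step _ _ _).2.2.2.1,
          (step _ _ _).2.2.2.2⟩)
      k
    set L : ℕ → Set ℕ := fun k => (state k).1.1 with hL
    set W : ℕ → Set ℕ := fun k => (state k).1.2 with hW
    have hWsucc : ∀ k, W (k+1) = W k ∪ L k := fun k => rfl
    have hLsub : ∀ k, L k ⊆ Sstar := fun k => (state k).2.2.1
    have hdisjLW : ∀ k, Disjoint (L k) (W k) := fun k => (state k).2.2.2.1
    have hbadL : ∀ k, ¬ (GS F (L k) ≤ H k) := fun k => (state k).2.2.2.2.2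
    have hWmono : ∀ j k, j ≤ k → W j ⊆ W k := by
      intro j k hjk
      induction k with
      | zero => rw [Nat.le_zero] at hjk; rw [hjk]
      | succ k ih =>
        rcases Nat.lt_or_ge j (k+1) with h' | h'
        · have := ih (Nat.lt_succ_iff.1 h')
          rw [hWsucc k]
          exact le_trans this Set.subset_union_left
        · have : j = k + 1 := le_antisymm hjk h'
          rw [this]
      -- done
    have hLW : ∀ j k, j < k → L j ⊆ W k := by
      intro j k hjk
      have h1 : L j ⊆ W (j+1) := by
        rw [hWsucc j]; exact Set.subset_union_right
      exact le_trans h1 (hWmono (j+1) k hjk)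
    have hdisj : ∀ j k, j ≠ k → Disjoint (L j) (L k) := by
      intro j k hne
      rcases Nat.lt_or_ge j k with h' | h'
      · exact Set.disjoint_of_subset_left (hLW j k h') (hdisjLW k).symm
      · have h'' : k < j := lt_of_le_of_ne h' (Ne.symm hne)
        exact Set.disjoint_of_subset_right (hLW k j h'') (hdisjLW j)
    -- two disjoint heavy unions
    set D1 : Set ℕ := ⋃ k, L (2*k) with hD1
    set D2 : Set ℕ := ⋃ k, L (2*k+1) with hD2
    have hD1heavy : ¬ light H D1 := by
      rintro ⟨m, hm⟩
      apply hbadL (2*m)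
      refine le_trans (GS_mono ?_) (le_trans hm (hmono (by omega)))
      exact Set.subset_iUnion (fun k => L (2*k)) m
    have hD2heavy : ¬ light H D2 := by
      rintro ⟨m, hm⟩
      apply hbadL (2*m+1)
      refine le_trans (GS_mono ?_) (le_trans hm (hmono (by omega)))
      exact Set.subset_iUnion (fun k => L (2*k+1)) m
    have hD1s : D1 ⊆ Sstar := Set.iUnion_subset (fun k => hLsub (2*k))
    have hD2sub : D2 ⊆ Sstar \ D1 := by
      intro i hi
      simp only [hD2, Set.mem_iUnion] at hi
      obtain ⟨k, hk⟩ := hi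
      refine ⟨hLsub _ hk, ?_⟩
      intro hiD1
      simp only [hD1, Set.mem_iUnion] at hiD1
      obtain ⟨j, hj⟩ := hiD1
      exact Set.disjoint_left.1 (hdisj (2*k+1) (2*j) (by omega)) hk hj
    exact hD2heavy (light_mono hD2sub (hcl D1 hD1s hD1heavy))
  · -- splitting case
    push_neg at hat
    have hsplit : ∀ S : Set ℕ, ¬ light H S →
        ∃ T, T ⊆ S ∧ ¬ light H T ∧ ¬ light H (S \ T) := by
      intro S hS
      obtain ⟨T, hT⟩ := hat S hS
      exact ⟨T, hT.1, hT.2.1, hT.2.2⟩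
    choose T hTsub hTheavy hTcheavy using hsplit
    let rest : ℕ → {S : Set ℕ // ¬ light H S} := fun k => Nat.rec
      (⟨Set.univ, not_light_univ hproper⟩)
      (fun _ p => ⟨p.1 \ T p.1 p.2, hTcheavy p.1 p.2⟩) k
    set blk : ℕ → Set ℕ := fun k => T (rest k).1 (rest k).2 with hblk
    have hrestsucc : ∀ k, (rest (k+1)).1 = (rest k).1 \ blk k := fun k => rfl
    have hblksub : ∀ k, blk k ⊆ (rest k).1 := fun k => hTsub _ _
    have hrestmono : ∀ j k, j ≤ k → (rest k).1 ⊆ (rest j).1 := by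
      intro j k hjk
      induction k with
      | zero => rw [Nat.le_zero] at hjk; rw [hjk]
      | succ k ih =>
        rcases Nat.lt_or_ge j (k+1) with h' | h'
        · rw [hrestsucc k]
          exact le_trans Set.diff_subset (ih (Nat.lt_succ_iff.1 h'))
        · have : j = k + 1 := le_antisymm hjk h'
          rw [this]
    have hdisj : ∀ j k, j ≠ k → Disjoint (blk j) (blk k) := by
      have key : ∀ j k, j < k → Disjoint (blk j) (blk k) := by
        intro j k hjk
        have h1 : blk k ⊆ (rest j).1 \ blk j := by
          refine le_trans (hblksub k) ?_
          rw [← hrestsucc j]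
          exact hrestmono (j+1) k hjk
        exact (Set.disjoint_of_subset_left h1 Set.disjoint_sdiff_left).symm.symm.symm
      intro j k hne
      rcases Nat.lt_or_ge j k with h' | h'
      · exact key j k h'
      · exact (key k j (lt_of_le_of_ne h' (Ne.symm hne))).symm
    exact no_disjoint_heavy_family hmono hcover hcomm blk hdisj
      (fun k => hTheavy _ _)

end main
end KTaux
namespace KTaux
section easy

variable {F : Type*} [Group F] [Finite F]

lemma exists_surj_hom (hne : commutator F ≠ ⊤) :
    ∃ (p : ℕ), p.Prime ∧
      ∃ χ : F →* Multiplicative (ZMod p), Function.Surjective χ := by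
  classical
  haveI := Fintype.ofFinite (Abelianization F)
  -- the abelianization is nontrivial
  haveI hAnt : Nontrivial (Abelianization F) := by
    obtain ⟨x, hx⟩ : ∃ x : F, x ∉ commutator F := by
      by_contra h
      push_neg at h
      exact hne (eq_top_iff.2 fun y _ => h y)
    refine ⟨Abelianization.of x, 1, fun h => hx ?_⟩
    exact (QuotientGroup.eq_one_iff x).1 h
  obtain ⟨p, hp, hdvd⟩ :=
    Nat.exists_prime_and_dvd (n := Fintype.card (Abelianization F))
      (Nat.ne_of_gt Fintype.one_lt_card)
  haveI hpfact : Fact p.Prime := ⟨hp⟩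
  obtain ⟨a, ha⟩ := exists_prime_orderOf_dvd_card (G := Abelianization F) p hdvd
  set B : Subgroup (Abelianization F) := (powMonoidHom p : Abelianization F →* _).range with hB
  have hBne : B ≠ ⊤ := by
    intro htop
    have hsurj : Function.Surjective (powMonoidHom p : Abelianization F →* _) :=
      MonoidHom.range_eq_top.1 htop
    have hinj : Function.Injective (powMonoidHom p : Abelianization F →* _) :=
      Finite.injective_iff_surjective.2 hsurj
    have h1 : a = 1 := by
      apply hinj
      show a ^ p = 1 ^ p
      rw [← ha, pow_orderOf_eq_one, one_pow]
    rw [h1, orderOf_one] at ha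
    exact hp.one_lt.ne ha
  set Q := Abelianization F ⧸ B with hQ
  haveI hQnt : Nontrivial Q := by
    obtain ⟨x, hx⟩ : ∃ x, x ∉ B := by
      by_contra h
      push_neg at h
      exact hBne (eq_top_iff.2 fun y _ => h y)
    exact ⟨QuotientGroup.mk x, 1, fun h => hx ((QuotientGroup.eq_one_iff x).1 h)⟩
  have hQpow : ∀ q : Q, q ^ p = 1 := by
    intro q
    induction q using QuotientGroup.induction_on with
    | _ x =>
      have : ((QuotientGroup.mk x : Q)) ^ p = QuotientGroup.mk (x ^ p) :=
        ((QuotientGroup.mk' B).map_pow x p).symm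
      rw [this, QuotientGroup.eq_one_iff]
      exact ⟨x, rfl⟩
  -- ZMod p module structure on Additive Q
  haveI : Module (ZMod p) (Additive Q) := AddCommGroup.zmodModule (by
    intro x
    have : (p • x).toMul = x.toMul ^ p := toMul_nsmul p x
    rw [hQpow x.toMul] at this
    exact Additive.toMul.injective this)
  haveI : Nontrivial (Additive Q) := ‹Nontrivial Q›
  let bQ := Module.Basis.ofVectorSpace (ZMod p) (Additive Q)
  obtain ⟨i0⟩ := bQ.index_nonempty
  let lam : Additive Q →ₗ[ZMod p] ZMod p := bQ.coord i0
  have hlam : Function.Surjective lam := by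
    intro c
    refine ⟨c • bQ i0, ?_⟩
    show bQ.repr (c • bQ i0) i0 = c
    rw [LinearEquiv.map_smul]
    simp [Module.Basis.repr_self]
  refine ⟨p, hp, (AddMonoidHom.toMultiplicativeRight lam.toAddMonoidHom).comp
    ((QuotientGroup.mk' B).comp Abelianization.of), ?_⟩
  have h1 : Function.Surjective (Abelianization.of : F → Abelianization F) := by
    intro q
    induction q using QuotientGroup.induction_on with
    | _ x => exact ⟨x, rfl⟩
  have h2 : Function.Surjective (QuotientGroup.mk' B) := QuotientGroup.mk'_surjective B
  have h3 : Function.Surjective (AddMonoidHom.toMultiplicativeRight lam.toAddMonoidHom) := by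
    rw [AddMonoidHom.coe_toMultiplicativeRight]
    exact (Multiplicative.ofAdd.surjective.comp hlam).comp Additive.ofMul.surjective
  exact h3.comp (h2.comp h1)

lemma easy_chain (hne : commutator F ≠ ⊤) :
    ∃ H : ℕ → Subgroup (ℕ → F),
      Monotone H ∧ (∀ n, H n ≠ ⊤) ∧ ∀ g : ℕ → F, ∃ n, g ∈ H n := by
  classical
  obtain ⟨p, hp, χ, hχ⟩ := exists_surj_hom hne
  haveI : Fact p.Prime := ⟨hp⟩
  set M : Type _ := ℕ → ZMod p with hM
  let b := Module.Basis.ofVectorSpace (ZMod p) M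
  set ι := ↥(Module.Basis.ofVectorSpaceIndex (ZMod p) M) with hι
  haveI : Infinite M := by
    haveI : Nontrivial (ZMod p) := by
      haveI : NeZero p := ⟨hp.ne_zero⟩
      exact ZMod.nontrivial_iff.2 hp.one_lt.ne'
    infer_instance
  haveI : Infinite ι := by
    by_contra hfin
    rw [not_infinite_iff_finite] at hfin
    haveI := Fintype.ofFinite ι
    have : Finite M := Finite.of_equiv _ (b.repr.toEquiv.trans
      (Finsupp.equivFunOnFinite)).symm
    exact absurd this (by simp [not_finite_iff_infinite]; infer_instance)
  let e : ℕ ↪ ι := Infinite.natEmbedding ι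
  -- the chain of submodules
  let V : ℕ → Submodule (ZMod p) M := fun n =>
    Submodule.span (ZMod p) (⇑b '' ((e '' {j | n ≤ j})ᶜ))
  have hVmono : Monotone V := by
    intro m n hmn
    apply Submodule.span_mono
    apply Set.image_mono
    intro i hi hmem
    exact hi (Set.image_mono (fun j (hj : n ≤ j) => le_trans hmn hj) hmem)
  have hVproper : ∀ n, b (e n) ∉ V n := by
    intro n
    apply b.linearIndependent.notMem_span_image
    simp only [Set.mem_compl_iff, not_not]
    exact Set.mem_image_of_mem e (le_refl n)
  have hVcover : ∀ x : M, ∃ n, x ∈ V n := by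
    intro x
    set sup := (b.repr x).support with hsup
    have hJfin : Set.Finite (⇑e ⁻¹' (↑sup : Set ι)) :=
      Set.Finite.preimage e.injective.injOn (Finset.finite_toSet sup)
    set n := hJfin.toFinset.sup id + 1 with hn
    refine ⟨n, ?_⟩
    have hx : ∑ i ∈ sup, (b.repr x) i • b i = x := by
      conv_rhs => rw [← b.linearCombination_repr x]
      rw [Finsupp.linearCombination_apply, Finsupp.sum]
    rw [← hx]
    apply Submodule.sum_mem
    intro i hi
    apply Submodule.smul_mem
    apply Submodule.subset_span
    refine ⟨i, ?_, rfl⟩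
    intro hmem
    obtain ⟨j, hj, hji⟩ := hmem
    have hjJ : j ∈ hJfin.toFinset := by
      rw [Set.Finite.mem_toFinset]
      show e j ∈ (↑sup : Set ι)
      rw [hji]
      exact hi
    have h1 : j ≤ hJfin.toFinset.sup id := Finset.le_sup (f := id) hjJ
    have h2 : n ≤ j := hj
    omega
  -- transfer to subgroups
  let K : ℕ → Subgroup (ℕ → Multiplicative (ZMod p)) := fun n =>
    { carrier := {h | (fun i => (h i).toAdd) ∈ V n}
      one_mem' := by
        show (fun _ => (0 : ZMod p)) ∈ V n
        exact (V n).zero_mem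
      mul_mem' := by
        intro a c ha hc
        exact (V n).add_mem ha hc
      inv_mem' := by
        intro a ha
        exact (V n).neg_mem ha }
  let Φ : (ℕ → F) →* (ℕ → Multiplicative (ZMod p)) :=
    { toFun := fun g i => χ (g i)
      map_one' := funext fun i => χ.map_one
      map_mul' := fun a c => funext fun i => χ.map_mul _ _ }
  refine ⟨fun n => (K n).comap Φ, ?_, ?_, ?_⟩
  · intro m n hmn g hg
    exact hVmono hmn hg
  · intro n htop
    obtain ⟨y, hy⟩ : ∃ y : ℕ → F, ∀ i, χ (y i) = Multiplicative.ofAdd (b (e n) i) := by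
      have h := fun i => hχ (Multiplicative.ofAdd (b (e n) i))
      exact ⟨fun i => (h i).choose, fun i => (h i).choose_spec⟩
    have hmem : y ∈ (K n).comap Φ := (le_of_eq htop.symm) (Subgroup.mem_top y)
    apply hVproper n
    have : (fun i => (Φ y i).toAdd) ∈ V n := hmem
    convert this using 2 with i
    rw [show Φ y i = χ (y i) from rfl, hy i]
    rfl
  · intro g
    obtain ⟨n, hn⟩ := hVcover (fun i => (χ (g i)).toAdd)
    exact ⟨n, hn⟩

end easy
end KTaux

/-- **Koppelberg–Tits.** Let `F` be a nontrivial finite group and `G n = F` for all `n`.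
Then the full direct product `∏ n, F` cannot be written as the union of a countable
increasing chain of proper subgroups iff `F` is perfect. -/
theorem stmt_0 (F : Type*) [Group F] [Finite F] [Nontrivial F] :
    (¬ ∃ H : ℕ → Subgroup (ℕ → F),
        Monotone H ∧ (∀ n, H n ≠ ⊤) ∧ ∀ g : ℕ → F, ∃ n, g ∈ H n)
      ↔ commutator F = ⊤ := by
  constructor
  · intro hno
    by_contra hne
    exact hno (KTaux.easy_chain hne)
  · rintro hperf ⟨H, hm, hp, hc⟩
    exact KTaux.main_contra hm hc hp hperf
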